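/- Let φ : ℝ → ℝ be the logistic function φ(x) = (1 + exp(−x))^{−1} and let δ > 0. Then there exist C > 0 and m₀ ∈ ℕ such that for all m ≥ m₀: (3m/δ)^{2m} ≥ C · m^{−1/2} · (3e/δ)^{2m} · max_{0 ≤ p ≤ 2m} sup_{b ∈ ℝ} |φ^{(p)}(b)|. In particular, if 0 < δ < 3e, the quantity (3m/δ)^{2m} / max_{0 ≤ p ≤ 2m} sup_{b ∈ ℝ} |φ^{(p)}(b)| grows at least exponentially in m. -/

import Mathlib

open Real Complex Metric

/-- The maximum over `0 ≤ p ≤ 2m` of the supremum over `b ∈ ℝ` of `|φ^{(p)}(b)|`. -/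
noncomputable def maxDerivSup (φ : ℝ → ℝ) (m : ℕ) : ℝ :=
  (Finset.range (2 * m + 1)).sup' Finset.nonempty_range_add_one fun p =>
    ⨆ b : ℝ, |iteratedDeriv p φ b|

open Nat NNReal ENNReal

namespace LPB

noncomputable def Fc : ℂ → ℂ := fun z => (1 + Complex.exp (-z))⁻¹

lemma abs_denom (z : ℂ) (hz : |z.im| ≤ 2) :
    (1 / 2 : ℝ) ≤ ‖1 + Complex.exp (-z)‖ := by
  have hcos1 : (1 / 2 : ℝ) ≤ Real.cos 1 := by
    have := Real.one_sub_sq_div_two_le_cos (x := 1); norm_num at this; linarith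
  have hcos2 : (-(1 / 2) : ℝ) ≤ Real.cos 2 := by
    have h := Real.cos_two_mul 1
    norm_num at h
    nlinarith [Real.cos_le_one 1]
  have hb : (-(1 / 2) : ℝ) ≤ Real.cos z.im := by
    rw [← Real.cos_abs]
    have h := Real.cos_le_cos_of_nonneg_of_le_pi (abs_nonneg z.im)
      (by linarith [Real.pi_gt_three]) hz
    linarith
  set t : ℝ := Real.exp (-z.re) with ht
  have htpos : 0 < t := Real.exp_pos _
  have hre : (Complex.exp (-z)).re = t * Real.cos z.im := by
    rw [Complex.exp_re]; simp [Real.cos_neg, ht]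
  have habs : ‖Complex.exp (-z)‖ = t := by
    rw [Complex.norm_exp]; simp [ht]
  have hsq : (Complex.exp (-z)).re ^ 2 + (Complex.exp (-z)).im ^ 2 = t ^ 2 := by
    have h1 := Complex.sq_norm (Complex.exp (-z))
    rw [habs] at h1
    rw [h1, Complex.normSq_apply]; ring
  have hnormSq : Complex.normSq (1 + Complex.exp (-z)) =
      1 + 2 * (t * Real.cos z.im) + t ^ 2 := by
    rw [Complex.normSq_apply]
    simp only [Complex.add_re, Complex.add_im, Complex.one_re, Complex.one_im]
    rw [← hre]; nlinarith [hsq]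
  have hge : (1 / 4 : ℝ) ≤ Complex.normSq (1 + Complex.exp (-z)) := by
    rw [hnormSq]
    rcases le_or_gt (Real.cos z.im) 0 with hc | hc
    · nlinarith [sq_nonneg (t + Real.cos z.im)]
    · nlinarith [mul_pos htpos hc, sq_nonneg t]
  have habs2 := Complex.sq_norm (1 + Complex.exp (-z))
  nlinarith [norm_nonneg (1 + Complex.exp (-z)), habs2]

lemma im_le_of_mem (x : ℝ) {z : ℂ} (hz : z ∈ closedBall (x : ℂ) 2) : |z.im| ≤ 2 := by
  have h1 : |(z - (x : ℂ)).im| ≤ ‖z - (x : ℂ)‖ := Complex.abs_im_le_norm _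
  have h2 : dist z (x : ℂ) ≤ 2 := mem_closedBall.1 hz
  rw [Complex.dist_eq] at h2
  simpa using h1.trans h2

lemma denom_ne_zero {z : ℂ} (hz : |z.im| ≤ 2) : 1 + Complex.exp (-z) ≠ 0 := by
  intro h0
  have := abs_denom z hz
  rw [h0] at this
  simp at this
  linarith

lemma Fc_le {z : ℂ} (hz : |z.im| ≤ 2) : ‖Fc z‖ ≤ 2 := by
  rw [Fc, norm_inv]
  have h := abs_denom z hz
  have h2 : (‖1 + Complex.exp (-z)‖)⁻¹ ≤ ((1:ℝ)/2)⁻¹ := by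
    apply inv_anti₀ (by norm_num) h
  simpa using h2

lemma diffAt {z : ℂ} (hz : 1 + Complex.exp (-z) ≠ 0) : DifferentiableAt ℂ Fc z := by
  have : DifferentiableAt ℂ (fun z : ℂ => 1 + Complex.exp (-z)) z :=
    (differentiableAt_id.neg.cexp).const_add 1
  exact this.inv hz

lemma complex_bound (n : ℕ) (x : ℝ) :
    ‖iteratedDeriv n Fc (x : ℂ)‖ ≤ 2 * n ! / 2 ^ n := by
  have hdiff : DifferentiableOn ℂ Fc (closedBall (x : ℂ) ((2 : ℝ≥0) : ℝ)) := by
    intro z hz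
    exact (diffAt (denom_ne_zero (im_le_of_mem x (by simpa using hz)))).differentiableWithinAt
  have hps : HasFPowerSeriesOnBall Fc (cauchyPowerSeries Fc (x : ℂ) ((2 : ℝ≥0) : ℝ))
      (x : ℂ) ((2 : ℝ≥0) : ℝ≥0∞) :=
    hdiff.hasFPowerSeriesOnBall (by norm_num)
  -- bound on coefficients
  have hcont : Continuous fun θ : ℝ => ‖Fc (circleMap (x : ℂ) 2 θ)‖ := by
    have h1 : Continuous fun θ : ℝ => 1 + Complex.exp (-circleMap (x : ℂ) 2 θ) :=
      continuous_const.add ((continuous_circleMap _ _).neg.cexp)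
    have h2 : Continuous fun θ : ℝ => Fc (circleMap (x : ℂ) 2 θ) := by
      apply h1.inv₀
      intro θ
      exact denom_ne_zero (im_le_of_mem x (circleMap_mem_closedBall _ (by norm_num) θ))
    exact h2.norm
  have hInt : (∫ θ in (0 : ℝ)..2 * π, ‖Fc (circleMap (x : ℂ) 2 θ)‖) ≤ 2 * π * 2 := by
    have h1 : (∫ θ in (0 : ℝ)..2 * π, ‖Fc (circleMap (x : ℂ) 2 θ)‖) ≤
        ∫ _ in (0 : ℝ)..2 * π, (2 : ℝ) := by
      apply intervalIntegral.integral_mono_on (by positivity)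
        (hcont.intervalIntegrable _ _) (intervalIntegrable_const)
      intro θ _
      exact Fc_le (im_le_of_mem x (circleMap_mem_closedBall _ (by norm_num) θ))
    simpa using h1
  have hcoef : ∀ k : ℕ, ‖cauchyPowerSeries Fc (x : ℂ) ((2 : ℝ≥0) : ℝ) k‖ ≤ 2 * (2 : ℝ)⁻¹ ^ k := by
    intro k
    have h := norm_cauchyPowerSeries_le Fc (x : ℂ) ((2 : ℝ≥0) : ℝ) k
    have h2 : ((2 * π)⁻¹ * ∫ θ in (0 : ℝ)..2 * π, ‖Fc (circleMap (x : ℂ) ((2 : ℝ≥0) : ℝ) θ)‖) *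
        |((2 : ℝ≥0) : ℝ)|⁻¹ ^ k ≤ 2 * (2 : ℝ)⁻¹ ^ k := by
      have hπ : (0 : ℝ) < π := Real.pi_pos
      have h3 : ((2 * π)⁻¹ * ∫ θ in (0 : ℝ)..2 * π, ‖Fc (circleMap (x : ℂ) 2 θ)‖) ≤ 2 := by
        rw [inv_mul_le_iff₀ (by positivity)]
        linarith [hInt]
      have h4 : |((2 : ℝ≥0) : ℝ)| = (2 : ℝ) := by norm_num
      rw [h4]
      have h5 : (0 : ℝ) ≤ (2 : ℝ)⁻¹ ^ k := by positivity
      have h6 : ((2 : ℝ≥0) : ℝ) = (2 : ℝ) := by norm_num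
      rw [h6] at *
      exact mul_le_mul_of_nonneg_right h3 h5
    calc ‖cauchyPowerSeries Fc (x : ℂ) ((2 : ℝ≥0) : ℝ) k‖ ≤ _ := h
      _ ≤ 2 * (2 : ℝ)⁻¹ ^ k := h2
  -- iterated derivative from power series
  have hiter : iteratedDeriv n Fc (x : ℂ) =
      n ! • (cauchyPowerSeries Fc (x : ℂ) ((2 : ℝ≥0) : ℝ) n fun _ => (1 : ℂ)) := by
    rw [iteratedDeriv_eq_iteratedFDeriv, ← hps.factorial_smul (y := (1 : ℂ)) n]
  rw [hiter]
  have hn : ‖(n ! : ℕ) • (cauchyPowerSeries Fc (x : ℂ) ((2 : ℝ≥0) : ℝ) n fun _ => (1 : ℂ))‖ =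
      (n ! : ℝ) * ‖cauchyPowerSeries Fc (x : ℂ) ((2 : ℝ≥0) : ℝ) n fun _ => (1 : ℂ)‖ := by
    rw [← Nat.cast_smul_eq_nsmul ℝ, norm_smul, Real.norm_natCast]
  have hop : ‖cauchyPowerSeries Fc (x : ℂ) ((2 : ℝ≥0) : ℝ) n fun _ => (1 : ℂ)‖ ≤
      ‖cauchyPowerSeries Fc (x : ℂ) ((2 : ℝ≥0) : ℝ) n‖ := by
    have h := (cauchyPowerSeries Fc (x : ℂ) ((2 : ℝ≥0) : ℝ) n).le_opNorm fun _ => (1 : ℂ)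
    simpa using h
  calc ‖(n !) • (cauchyPowerSeries Fc (x : ℂ) ((2 : ℝ≥0) : ℝ) n fun _ => (1 : ℂ))‖
      = (n ! : ℝ) * ‖cauchyPowerSeries Fc (x : ℂ) ((2 : ℝ≥0) : ℝ) n fun _ => (1 : ℂ)‖ := hn
    _ ≤ (n ! : ℝ) * (2 * (2 : ℝ)⁻¹ ^ n) :=
        mul_le_mul_of_nonneg_left (hop.trans (hcoef n)) (by positivity)
    _ = 2 * n ! / 2 ^ n := by rw [inv_pow]; field_simp

lemma iter_diffAt (n : ℕ) (x : ℝ) : DifferentiableAt ℂ (iteratedDeriv n Fc) (x : ℂ) := by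
  set S : Set ℂ := {z : ℂ | 1 + Complex.exp (-z) ≠ 0} with hS
  have hopen : IsOpen S :=
    isOpen_compl_singleton.preimage (continuous_const.add continuous_neg.cexp)
  have hdo : DifferentiableOn ℂ Fc S := fun z hz => (diffAt hz).differentiableWithinAt
  have hA : AnalyticOnNhd ℂ Fc S := hdo.analyticOnNhd hopen
  have hAn : ∀ k : ℕ, AnalyticOnNhd ℂ (iteratedDeriv k Fc) S := by
    intro k
    induction k with
    | zero => simpa using hA
    | succ k ih =>
      rw [iteratedDeriv_succ]
      exact ih.deriv
  have hx : (x : ℂ) ∈ S := denom_ne_zero (by simp)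
  exact (hAn n (x : ℂ) hx).differentiableAt

lemma real_eq (n : ℕ) (x : ℝ) :
    iteratedDeriv n (fun t : ℝ => (1 + Real.exp (-t))⁻¹) x = (iteratedDeriv n Fc (x : ℂ)).re := by
  induction n generalizing x with
  | zero =>
    simp only [iteratedDeriv_zero]
    have h : (1 : ℂ) + Complex.exp (-(x : ℂ)) = ((1 + Real.exp (-x) : ℝ) : ℂ) := by
      rw [Complex.ofReal_add, Complex.ofReal_one, Complex.ofReal_exp, Complex.ofReal_neg]
    rw [Fc]; simp only [h, ← Complex.ofReal_inv, Complex.ofReal_re]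
  | succ n ih =>
    rw [iteratedDeriv_succ, iteratedDeriv_succ]
    have hfun : iteratedDeriv n (fun t : ℝ => (1 + Real.exp (-t))⁻¹) =
        fun t : ℝ => (iteratedDeriv n Fc (t : ℂ)).re := funext fun t => ih t
    rw [hfun]
    have hd : HasDerivAt (iteratedDeriv n Fc) (deriv (iteratedDeriv n Fc) (x : ℂ)) (x : ℂ) :=
      (iter_diffAt n x).hasDerivAt
    exact hd.real_of_complex.deriv

lemma phi_bound (p : ℕ) (x : ℝ) :
    |iteratedDeriv p (fun t : ℝ => (1 + Real.exp (-t))⁻¹) x| ≤ 2 * p ! / 2 ^ p := by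
  rw [real_eq]
  exact (Complex.abs_re_le_norm _).trans (complex_bound p x)

lemma fact_div_mono (p k : ℕ) (hp : 1 ≤ p) :
    (p ! : ℝ) / 2 ^ p ≤ ((p + k)! : ℝ) / 2 ^ (p + k) := by
  induction k with
  | zero => simp
  | succ k ih =>
    refine ih.trans ?_
    have h1 : ((p + (k + 1))! : ℝ) = ((p + k + 1 : ℕ) : ℝ) * ((p + k)! : ℝ) := by
      rw [show p + (k + 1) = (p + k) + 1 from rfl, Nat.factorial_succ]
      push_cast
      ring
    have h2 : (2 : ℝ) ^ (p + (k + 1)) = 2 ^ (p + k) * 2 := by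
      rw [show p + (k + 1) = (p + k) + 1 from rfl, pow_succ]
    have hc2 : (2 : ℝ) ≤ ((p + k + 1 : ℕ) : ℝ) := by exact_mod_cast (by omega : 2 ≤ p + k + 1)
    calc ((p + k)! : ℝ) / 2 ^ (p + k) = 2 * ((p + k)! : ℝ) / (2 ^ (p + k) * 2) := by
          field_simp
      _ ≤ ((p + k + 1 : ℕ) : ℝ) * ((p + k)! : ℝ) / (2 ^ (p + k) * 2) := by gcongr
      _ = ((p + (k + 1))! : ℝ) / 2 ^ (p + (k + 1)) := by rw [h1, h2]

lemma fact_div_le (p q : ℕ) (hpq : p ≤ q) :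
    (p ! : ℝ) / 2 ^ p ≤ 1 + (q ! : ℝ) / 2 ^ q := by
  rcases Nat.eq_zero_or_pos p with rfl | hp
  · simp
    positivity
  · obtain ⟨k, rfl⟩ := Nat.exists_eq_add_of_le hpq
    have := fact_div_mono p k hp
    have h0 : (0 : ℝ) ≤ ((p + k)! : ℝ) / 2 ^ (p + k) := by positivity
    linarith

lemma stirling_bound (n : ℕ) (hn : 1 ≤ n) :
    (n ! : ℝ) ≤ Real.exp 1 * Real.sqrt (2 * n) * ((n : ℝ) / Real.exp 1) ^ n := by
  obtain ⟨k, rfl⟩ := Nat.exists_eq_add_of_le hn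
  have hs : Stirling.stirlingSeq (1 + k) ≤ Real.exp 1 / Real.sqrt 2 := by
    have h := Stirling.stirlingSeq'_antitone (Nat.zero_le k)
    simp only [Function.comp_apply, Nat.succ_eq_add_one] at h
    rw [Stirling.stirlingSeq_one] at h
    simpa [Nat.add_comm 1 k] using h
  have hd : (0 : ℝ) < Real.sqrt (2 * (1 + k)) * (((1 + k : ℕ) : ℝ) / Real.exp 1) ^ (1 + k) := by
    have : (0 : ℝ) < ((1 + k : ℕ) : ℝ) := by positivity
    positivity
  have hdef : ((1 + k)! : ℝ) = Stirling.stirlingSeq (1 + k) *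
      (Real.sqrt (2 * (1 + k)) * (((1 + k : ℕ) : ℝ) / Real.exp 1) ^ (1 + k)) := by
    rw [Stirling.stirlingSeq]
    push_cast
    field_simp
  rw [hdef]
  have h2 : Real.exp 1 / Real.sqrt 2 ≤ Real.exp 1 := by
    apply div_le_self (Real.exp_pos 1).le
    rw [show (1:ℝ) = Real.sqrt 1 by simp]
    exact Real.sqrt_le_sqrt (by norm_num)
  calc Stirling.stirlingSeq (1 + k) *
        (Real.sqrt (2 * (1 + k)) * (((1 + k : ℕ) : ℝ) / Real.exp 1) ^ (1 + k))
      ≤ Real.exp 1 * (Real.sqrt (2 * (1 + k)) * (((1 + k : ℕ) : ℝ) / Real.exp 1) ^ (1 + k)) :=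
        mul_le_mul_of_nonneg_right (hs.trans h2) hd.le
    _ = _ := by push_cast; ring

lemma max_bound (m : ℕ) :
    maxDerivSup (fun t : ℝ => (1 + Real.exp (-t))⁻¹) m ≤
      2 * (1 + ((2 * m)! : ℝ) / 2 ^ (2 * m)) := by
  unfold maxDerivSup
  apply Finset.sup'_le
  intro p hp
  have hpm : p ≤ 2 * m := Nat.lt_succ_iff.1 (Finset.mem_range.1 hp)
  apply ciSup_le
  intro b
  calc |iteratedDeriv p (fun t : ℝ => (1 + Real.exp (-t))⁻¹) b| ≤ 2 * p ! / 2 ^ p :=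
      phi_bound p b
    _ = 2 * ((p ! : ℝ) / 2 ^ p) := by ring
    _ ≤ 2 * (1 + ((2 * m)! : ℝ) / 2 ^ (2 * m)) := by
        have := fact_div_le p (2 * m) hpm
        linarith

lemma max_pos (m : ℕ) :
    (1 / 2 : ℝ) ≤ maxDerivSup (fun t : ℝ => (1 + Real.exp (-t))⁻¹) m := by
  have h0 : (0 : ℕ) ∈ Finset.range (2 * m + 1) := Finset.mem_range.2 (Nat.succ_pos _)
  have hb : BddAbove (Set.range fun b : ℝ =>
      |iteratedDeriv 0 (fun t : ℝ => (1 + Real.exp (-t))⁻¹) b|) := by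
    refine ⟨2, ?_⟩
    rintro y ⟨b, rfl⟩
    have := phi_bound 0 b
    simpa using this
  have h1 : (1 / 2 : ℝ) ≤ ⨆ b : ℝ, |iteratedDeriv 0 (fun t : ℝ => (1 + Real.exp (-t))⁻¹) b| := by
    have h2 : |iteratedDeriv 0 (fun t : ℝ => (1 + Real.exp (-t))⁻¹) 0| = 1 / 2 := by
      simp [Real.exp_zero]
      norm_num
    rw [← h2]
    exact le_ciSup hb 0
  refine h1.trans ?_
  unfold maxDerivSup
  exact Finset.le_sup' (fun p => ⨆ b : ℝ, |iteratedDeriv p (fun t : ℝ => (1 + Real.exp (-t))⁻¹) b|) h0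

end LPB

theorem logistic_parameter_lower_bound (δ : ℝ) (hδ : 0 < δ) :
    (∃ C : ℝ, 0 < C ∧ ∃ m₀ : ℕ, ∀ m : ℕ, m₀ ≤ m →
      C * (m : ℝ) ^ (-(1 : ℝ) / 2) * (3 * Real.exp 1 / δ) ^ (2 * m) *
          maxDerivSup (fun t : ℝ => (1 + Real.exp (-t))⁻¹) m
        ≤ (3 * (m : ℝ) / δ) ^ (2 * m)) ∧
    (δ < 3 * Real.exp 1 →
      ∃ ρ : ℝ, 1 < ρ ∧ ∃ C' : ℝ, 0 < C' ∧ ∃ m₀ : ℕ, ∀ m : ℕ, m₀ ≤ m →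
        C' * ρ ^ m ≤ (3 * (m : ℝ) / δ) ^ (2 * m) /
          maxDerivSup (fun t : ℝ => (1 + Real.exp (-t))⁻¹) m) := by
  have he : (0 : ℝ) < Real.exp 1 := Real.exp_pos 1
  set K : ℝ := 2 + 8 * Real.exp 1 with hK
  have hKpos : 0 < K := by positivity
  -- main eventual bound, for m ≥ 3
  have main : ∀ m : ℕ, 3 ≤ m →
      K⁻¹ * (m : ℝ) ^ (-(1 : ℝ) / 2) * (3 * Real.exp 1 / δ) ^ (2 * m) *
          maxDerivSup (fun t : ℝ => (1 + Real.exp (-t))⁻¹) m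
        ≤ (3 * (m : ℝ) / δ) ^ (2 * m) := by
    intro m hm
    have hm1 : (1 : ℝ) ≤ (m : ℝ) := by exact_mod_cast (by omega : 1 ≤ m)
    have hm3 : (3 : ℝ) ≤ (m : ℝ) := by exact_mod_cast hm
    have hmpos : (0 : ℝ) < (m : ℝ) := by linarith
    have hsqrt1 : (1 : ℝ) ≤ Real.sqrt m := by
      rw [show (1:ℝ) = Real.sqrt 1 by simp]
      exact Real.sqrt_le_sqrt hm1
    have hme : Real.exp 1 ≤ (m : ℝ) := by
      have := Real.exp_one_lt_d9
      linarith
    have hQ1 : (1 : ℝ) ≤ ((m : ℝ) / Real.exp 1) ^ (2 * m) := by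
      apply one_le_pow₀
      rw [le_div_iff₀ he]
      linarith
    -- Stirling bound on (2m)!
    have hst : ((2 * m)! : ℝ) ≤ Real.exp 1 * (2 * Real.sqrt m) *
        ((2 * (m : ℝ)) / Real.exp 1) ^ (2 * m) := by
      have h := LPB.stirling_bound (2 * m) (by omega)
      have h2 : Real.sqrt (2 * (2 * m : ℕ)) = 2 * Real.sqrt m := by
        push_cast
        rw [show (2 : ℝ) * (2 * (m : ℝ)) = 4 * m by ring, show (4 : ℝ) * m = 2^2 * m by norm_num,
          Real.sqrt_mul (by positivity), Real.sqrt_sq (by norm_num)]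
      rw [h2] at h
      calc ((2 * m)! : ℝ) ≤ _ := h
        _ = Real.exp 1 * (2 * Real.sqrt m) * ((2 * (m : ℝ)) / Real.exp 1) ^ (2 * m) := by
            push_cast; ring
    have hfact : ((2 * m)! : ℝ) / 2 ^ (2 * m) ≤
        2 * Real.exp 1 * Real.sqrt m * ((m : ℝ) / Real.exp 1) ^ (2 * m) := by
      have hpow : ((2 * (m : ℝ)) / Real.exp 1) ^ (2 * m) =
          2 ^ (2 * m) * ((m : ℝ) / Real.exp 1) ^ (2 * m) := by
        rw [← mul_pow]
        congr 1
        field_simp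
      rw [div_le_iff₀ (by positivity : (0:ℝ) < 2 ^ (2*m))]
      calc ((2 * m)! : ℝ) ≤ Real.exp 1 * (2 * Real.sqrt m) *
            ((2 * (m : ℝ)) / Real.exp 1) ^ (2 * m) := hst
        _ = 2 * Real.exp 1 * Real.sqrt m * ((m : ℝ) / Real.exp 1) ^ (2 * m) * 2 ^ (2 * m) := by
            rw [hpow]; ring
    have hM : maxDerivSup (fun t : ℝ => (1 + Real.exp (-t))⁻¹) m ≤
        K * Real.sqrt m * ((m : ℝ) / Real.exp 1) ^ (2 * m) := by
      calc maxDerivSup (fun t : ℝ => (1 + Real.exp (-t))⁻¹) m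
          ≤ 2 * (1 + ((2 * m)! : ℝ) / 2 ^ (2 * m)) := LPB.max_bound m
        _ ≤ 2 * (1 + 2 * Real.exp 1 * Real.sqrt m * ((m : ℝ) / Real.exp 1) ^ (2 * m)) := by
            linarith
        _ ≤ K * Real.sqrt m * ((m : ℝ) / Real.exp 1) ^ (2 * m) := by
            rw [hK]
            nlinarith [mul_le_mul_of_nonneg_left hQ1 (by positivity : (0:ℝ) ≤ Real.sqrt m), hsqrt1,
              mul_pos (Real.exp_pos 1) (mul_pos (by linarith : (0:ℝ) < Real.sqrt m)
                (by positivity : (0:ℝ) < ((m : ℝ) / Real.exp 1) ^ (2 * m)))]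
    have hrpow : (m : ℝ) ^ (-(1 : ℝ) / 2) = (Real.sqrt m)⁻¹ := by
      rw [neg_div, Real.rpow_neg hmpos.le, Real.sqrt_eq_rpow]
    have hsplit : (3 * (m : ℝ) / δ) ^ (2 * m) =
        (3 * Real.exp 1 / δ) ^ (2 * m) * ((m : ℝ) / Real.exp 1) ^ (2 * m) := by
      rw [← mul_pow]
      congr 1
      field_simp
    rw [hrpow, hsplit]
    have hP : (0 : ℝ) < (3 * Real.exp 1 / δ) ^ (2 * m) := by positivity
    have hsq : (0:ℝ) < Real.sqrt m := by linarith
    calc K⁻¹ * (Real.sqrt m)⁻¹ * (3 * Real.exp 1 / δ) ^ (2 * m) *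
          maxDerivSup (fun t : ℝ => (1 + Real.exp (-t))⁻¹) m
        ≤ K⁻¹ * (Real.sqrt m)⁻¹ * (3 * Real.exp 1 / δ) ^ (2 * m) *
          (K * Real.sqrt m * ((m : ℝ) / Real.exp 1) ^ (2 * m)) := by
          apply mul_le_mul_of_nonneg_left hM (by positivity)
      _ = (3 * Real.exp 1 / δ) ^ (2 * m) * ((m : ℝ) / Real.exp 1) ^ (2 * m) := by
          rw [show K⁻¹ * (Real.sqrt (m : ℝ))⁻¹ * (3 * Real.exp 1 / δ) ^ (2 * m) *
                (K * Real.sqrt (m : ℝ) * ((m : ℝ) / Real.exp 1) ^ (2 * m))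
              = (K⁻¹ * K) * ((Real.sqrt (m : ℝ))⁻¹ * Real.sqrt (m : ℝ)) *
                ((3 * Real.exp 1 / δ) ^ (2 * m) * ((m : ℝ) / Real.exp 1) ^ (2 * m)) from by ring,
            inv_mul_cancel₀ hKpos.ne', inv_mul_cancel₀ hsq.ne', one_mul, one_mul]
  refine ⟨⟨K⁻¹, by positivity, 3, main⟩, ?_⟩
  intro hδ3
  set ρ : ℝ := 3 * Real.exp 1 / δ with hρdef
  have hρ : 1 < ρ := (one_lt_div hδ).2 hδ3
  refine ⟨ρ, hρ, K⁻¹, by positivity, max 3 (⌈((ρ - 1)⁻¹) ^ 2⌉₊ + 1), ?_⟩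
  intro m hm
  have hm3 : 3 ≤ m := le_trans (le_max_left _ _) hm
  have hmc : ((ρ - 1)⁻¹) ^ 2 ≤ (m : ℝ) := by
    calc ((ρ - 1)⁻¹) ^ 2 ≤ (⌈((ρ - 1)⁻¹) ^ 2⌉₊ : ℝ) := Nat.le_ceil _
      _ ≤ (m : ℝ) := by exact_mod_cast le_trans (Nat.le_succ _) (le_trans (le_max_right _ _) hm)
  have hm1 : (1 : ℝ) ≤ (m : ℝ) := by exact_mod_cast (by omega : 1 ≤ m)
  have hmpos : (0 : ℝ) < (m : ℝ) := by linarith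
  have hsq : (0 : ℝ) < Real.sqrt m := Real.sqrt_pos.2 hmpos
  have hρ1 : (0 : ℝ) < ρ - 1 := by linarith
  have hsqrtge : (ρ - 1)⁻¹ ≤ Real.sqrt m := by
    calc (ρ - 1)⁻¹ = Real.sqrt (((ρ - 1)⁻¹) ^ 2) := (Real.sqrt_sq (by positivity)).symm
      _ ≤ Real.sqrt m := Real.sqrt_le_sqrt hmc
  have hkey : (1 : ℝ) ≤ Real.sqrt m * (ρ - 1) := by
    have h := mul_le_mul_of_nonneg_right hsqrtge hρ1.le
    rwa [inv_mul_cancel₀ (ne_of_gt hρ1)] at h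
  have hpow : Real.sqrt m ≤ ρ ^ m := by
    have hb := one_add_mul_le_pow (by linarith : (-2 : ℝ) ≤ ρ - 1) m
    have hms : Real.sqrt m * Real.sqrt m = (m : ℝ) := Real.mul_self_sqrt hmpos.le
    have h2 : Real.sqrt m ≤ (m : ℝ) * (ρ - 1) := by
      calc Real.sqrt m = Real.sqrt m * 1 := by ring
        _ ≤ Real.sqrt m * (Real.sqrt m * (ρ - 1)) :=
            mul_le_mul_of_nonneg_left hkey hsq.le
        _ = (m : ℝ) * (ρ - 1) := by
            rw [show Real.sqrt (m : ℝ) * (Real.sqrt (m : ℝ) * (ρ - 1))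
                  = Real.sqrt (m : ℝ) * Real.sqrt (m : ℝ) * (ρ - 1) from by ring, hms]
    calc Real.sqrt m ≤ (m : ℝ) * (ρ - 1) := h2
      _ ≤ 1 + (m : ℝ) * (ρ - 1) := by linarith
      _ ≤ (1 + (ρ - 1)) ^ m := hb
      _ = ρ ^ m := by rw [show (1 : ℝ) + (ρ - 1) = ρ by ring]
  have hMpos : (0 : ℝ) < maxDerivSup (fun t : ℝ => (1 + Real.exp (-t))⁻¹) m := by
    linarith [LPB.max_pos m]
  have hmain := main m hm3
  have hrpow : (m : ℝ) ^ (-(1 : ℝ) / 2) = (Real.sqrt m)⁻¹ := by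
    rw [neg_div, Real.rpow_neg hmpos.le, Real.sqrt_eq_rpow]
  rw [hrpow] at hmain
  have hdiv : K⁻¹ * (Real.sqrt m)⁻¹ * ρ ^ (2 * m) ≤
      (3 * (m : ℝ) / δ) ^ (2 * m) / maxDerivSup (fun t : ℝ => (1 + Real.exp (-t))⁻¹) m := by
    rw [le_div_iff₀ hMpos]
    exact hmain
  refine le_trans ?_ hdiv
  have h2m : ρ ^ (2 * m) = ρ ^ m * ρ ^ m := by rw [two_mul, pow_add]
  rw [h2m]
  calc K⁻¹ * ρ ^ m = K⁻¹ * (Real.sqrt m)⁻¹ * (Real.sqrt m * ρ ^ m) := by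
        rw [show K⁻¹ * (Real.sqrt (m : ℝ))⁻¹ * (Real.sqrt (m : ℝ) * ρ ^ m)
              = K⁻¹ * ((Real.sqrt (m : ℝ))⁻¹ * Real.sqrt (m : ℝ)) * ρ ^ m from by ring,
          inv_mul_cancel₀ hsq.ne', mul_one]
    _ ≤ K⁻¹ * (Real.sqrt m)⁻¹ * (ρ ^ m * ρ ^ m) := by
        apply mul_le_mul_of_nonneg_left _ (by positivity)
        exact mul_le_mul_of_nonneg_right hpow (by positivity)
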